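/- There exists an absolute constant C > 0 with the following property. Let n ≥ 1, let t_0 < t_1 < … < t_n be real numbers, let x_0, …, x_n ∈ ℝ, and set τ_i = t_{i+1} − t_i. Let X : [t_0, t_n] → ℝ be twice continuously differentiable, restrict to a polynomial of degree at most 3 on each interval [t_i, t_{i+1}], satisfy X(t_i) = x_i for every i, and satisfy X''(t_0) = X''(t_n) = 0. Then sup_{[t_0,t_n]} |X| + sup_{[t_0,t_n]} |X'| + sup_{[t_0,t_n]} |X''| ≤ C · (max_i τ_i) · (max_i |x_i|) · (min_i τ_i)^{-2} · (max_i τ_i + (min_i τ_i)^{-1}). -/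

import Mathlib

open Set Finset

section SplineAux
open Polynomial Topology

private lemma eval_repr3 {p : ℝ[X]} (hp : p.natDegree ≤ 3) (s : ℝ) :
    p.eval s = p.coeff 0 + p.coeff 1 * s + p.coeff 2 * s ^ 2 + p.coeff 3 * s ^ 3 := by
  rw [Polynomial.eval_eq_sum_range' (Nat.lt_succ_of_le hp)]
  simp [Finset.sum_range_succ]

private lemma deriv_repr3 {p : ℝ[X]} (hp : p.natDegree ≤ 3) (s : ℝ) :
    p.derivative.eval s = p.coeff 1 + 2 * p.coeff 2 * s + 3 * p.coeff 3 * s ^ 2 := by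
  have h2 : p.derivative.natDegree < 3 :=
    lt_of_le_of_lt (p.natDegree_derivative_le) (by omega)
  rw [Polynomial.eval_eq_sum_range' h2]
  simp [Finset.sum_range_succ, coeff_derivative]
  ring

private lemma deriv2_repr3 {p : ℝ[X]} (hp : p.natDegree ≤ 3) (s : ℝ) :
    p.derivative.derivative.eval s = 2 * p.coeff 2 + 6 * p.coeff 3 * s := by
  have h2 : p.derivative.derivative.natDegree < 2 := by
    have := p.derivative.natDegree_derivative_le
    have := p.natDegree_derivative_le
    omega
  rw [Polynomial.eval_eq_sum_range' h2]
  simp [Finset.sum_range_succ, coeff_derivative]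
  ring

private lemma cubic_eval_right {p : ℝ[X]} (hp : p.natDegree ≤ 3) {u v : ℝ} (huv : u < v) :
    p.derivative.eval v = (p.eval v - p.eval u) / (v - u)
      + (v - u) * (2 * p.derivative.derivative.eval v + p.derivative.derivative.eval u) / 6 := by
  have h : v - u ≠ 0 := sub_ne_zero.mpr huv.ne'
  rw [eval_repr3 hp, eval_repr3 hp, deriv_repr3 hp, deriv2_repr3 hp, deriv2_repr3 hp]
  field_simp
  ring

private lemma cubic_eval_left {p : ℝ[X]} (hp : p.natDegree ≤ 3) {u v : ℝ} (huv : u < v) :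
    p.derivative.eval u = (p.eval v - p.eval u) / (v - u)
      - (v - u) * (2 * p.derivative.derivative.eval u + p.derivative.derivative.eval v) / 6 := by
  have h : v - u ≠ 0 := sub_ne_zero.mpr huv.ne'
  rw [eval_repr3 hp, eval_repr3 hp, deriv_repr3 hp, deriv2_repr3 hp, deriv2_repr3 hp]
  field_simp
  ring

private lemma affine_bound3 {p : ℝ[X]} (hp : p.natDegree ≤ 3) {u v s : ℝ} (huv : u < v)
    (hs : s ∈ Set.Icc u v) :
    |p.derivative.derivative.eval s| ≤ |p.derivative.derivative.eval u|
      + |p.derivative.derivative.eval v| := by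
  have h : v - u ≠ 0 := sub_ne_zero.mpr huv.ne'
  have key : p.derivative.derivative.eval s
      = ((v - s) * p.derivative.derivative.eval u + (s - u) * p.derivative.derivative.eval v)
        / (v - u) := by
    rw [deriv2_repr3 hp, deriv2_repr3 hp, deriv2_repr3 hp]
    field_simp
    ring
  obtain ⟨hsu, hsv⟩ := hs
  rw [key, abs_div, abs_of_pos (sub_pos.mpr huv), div_le_iff₀ (sub_pos.mpr huv)]
  have h1 : |(v - s) * p.derivative.derivative.eval u + (s - u) * p.derivative.derivative.eval v|
      ≤ (v - s) * |p.derivative.derivative.eval u| + (s - u) * |p.derivative.derivative.eval v| := by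
    refine (abs_add_le _ _).trans ?_
    rw [abs_mul (v - s), abs_mul (s - u), abs_of_nonneg (sub_nonneg.mpr hsv),
      abs_of_nonneg (sub_nonneg.mpr hsu)]
  refine h1.trans ?_
  nlinarith [abs_nonneg (p.derivative.derivative.eval u), abs_nonneg (p.derivative.derivative.eval v)]

private lemma eqOn_closure_pt {f g : ℝ → ℝ} {S : Set ℝ} {u v y : ℝ} (huv : u < v)
    (hsub : Set.Icc u v ⊆ S) (hy : y ∈ Set.Icc u v)
    (hf : ContinuousOn f S) (hg : Continuous g)
    (heq : ∀ s ∈ Set.Ioo u v, f s = g s) : f y = g y := by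
  have hne : (𝓝[Set.Ioo u v] y).NeBot := by
    rw [← mem_closure_iff_nhdsWithin_neBot, closure_Ioo huv.ne]; exact hy
  have h1 : Filter.Tendsto f (𝓝[Set.Ioo u v] y) (𝓝 (f y)) :=
    (hf y (hsub hy)).mono (Set.Ioo_subset_Icc_self.trans hsub)
  have h2 : Filter.Tendsto f (𝓝[Set.Ioo u v] y) (𝓝 (g y)) := by
    refine Filter.Tendsto.congr' ?_ ((hg.tendsto y).mono_left nhdsWithin_le_nhds)
    filter_upwards [self_mem_nhdsWithin] with z hz using (heq z hz).symm
  exact tendsto_nhds_unique h1 h2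

private lemma eq_on_piece {S : Set ℝ} (hS : UniqueDiffOn ℝ S) {X : ℝ → ℝ} {p : ℝ[X]}
    {u v : ℝ} (huv : u < v) (hsub : Set.Icc u v ⊆ S)
    (hXp : ∀ s ∈ Set.Icc u v, X s = p.eval s)
    (hf1 : ContinuousOn (derivWithin X S) S)
    (hf2 : ContinuousOn (iteratedDerivWithin 2 X S) S) :
    (∀ s ∈ Set.Icc u v, derivWithin X S s = p.derivative.eval s) ∧
    (∀ s ∈ Set.Icc u v, iteratedDerivWithin 2 X S s = p.derivative.derivative.eval s) := by
  have hA : ∀ s ∈ Set.Ioo u v, derivWithin X S s = p.derivative.eval s := by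
    intro s hs
    have hev : X =ᶠ[𝓝[S] s] (fun y => p.eval y) := by
      refine Filter.EventuallyEq.filter_mono ?_ nhdsWithin_le_nhds
      filter_upwards [Ioo_mem_nhds hs.1 hs.2] with z hz using hXp z (Ioo_subset_Icc_self hz)
    rw [hev.derivWithin_eq (hXp s (Ioo_subset_Icc_self hs))]
    exact (p.hasDerivAt s).hasDerivWithinAt.derivWithin (hS s (hsub (Ioo_subset_Icc_self hs)))
  have hA' : ∀ s ∈ Set.Icc u v, derivWithin X S s = p.derivative.eval s :=
    fun s hs => eqOn_closure_pt huv hsub hs hf1 p.derivative.continuous hA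
  refine ⟨hA', ?_⟩
  have hstep : ∀ s ∈ S, iteratedDerivWithin 2 X S s = derivWithin (derivWithin X S) S s := by
    intro s hs
    rw [iteratedDerivWithin_succ]
    exact derivWithin_congr (fun y hy => congrFun iteratedDerivWithin_one y)
      (congrFun iteratedDerivWithin_one s)
  have hC : ∀ s ∈ Set.Ioo u v, iteratedDerivWithin 2 X S s = p.derivative.derivative.eval s := by
    intro s hs
    rw [hstep s (hsub (Ioo_subset_Icc_self hs))]
    have hev : derivWithin X S =ᶠ[𝓝[S] s] (fun y => p.derivative.eval y) := by
      have hIoo : ∀ᶠ z in 𝓝[S] s, z ∈ Set.Ioo u v :=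
        Filter.Eventually.filter_mono nhdsWithin_le_nhds (Ioo_mem_nhds hs.1 hs.2)
      filter_upwards [hIoo] with z hz using hA z hz
    rw [hev.derivWithin_eq (hA s hs)]
    exact (p.derivative.hasDerivAt s).hasDerivWithinAt.derivWithin
      (hS s (hsub (Ioo_subset_Icc_self hs)))
  exact fun s hs => eqOn_closure_pt huv hsub hs hf2 p.derivative.derivative.continuous hC

private lemma knots_mono {n : ℕ} {t : ℕ → ℝ} (ht : ∀ i < n, t i < t (i + 1)) :
    ∀ j ≤ n, ∀ i ≤ j, t i ≤ t j := by
  intro j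
  induction j with
  | zero => intro _ i hi; interval_cases i; rfl
  | succ k IH =>
    intro hk i hi
    rcases Nat.lt_succ_iff_lt_or_eq.mp (Nat.lt_succ_of_le hi) with h | h
    · exact le_trans (IH (by omega) i (by omega)) (ht k (by omega)).le
    · subst h; rfl

private lemma knots_cover {n : ℕ} {t : ℕ → ℝ} (ht : ∀ i < n, t i < t (i + 1)) (hn : 1 ≤ n)
    {s : ℝ} (hs : s ∈ Set.Icc (t 0) (t n)) : ∃ i < n, s ∈ Set.Icc (t i) (t (i + 1)) := by
  induction n with
  | zero => omega
  | succ m IH =>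
    rcases Nat.eq_zero_or_pos m with hm | hm
    · exact ⟨0, by omega, by rwa [hm] at hs⟩
    · by_cases hsm : s ≤ t m
      · obtain ⟨i, hi, hmem⟩ := IH (fun i hi => ht i (by omega)) hm ⟨hs.1, hsm⟩
        exact ⟨i, by omega, hmem⟩
      · exact ⟨m, by omega, ⟨(not_le.mp hsm).le, hs.2⟩⟩

private lemma poly_mvt (p : ℝ[X]) {a b : ℝ} (hab : a < b) :
    ∃ c ∈ Set.Ioo a b, p.derivative.eval c = (p.eval b - p.eval a) / (b - a) := by
  have := exists_hasDerivAt_eq_slope (fun y => p.eval y) (fun y => p.derivative.eval y) hab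
    p.continuous.continuousOn (fun y _ => p.hasDerivAt y)
  exact this

private lemma poly_incr_bound (p : ℝ[X]) {a b B : ℝ} (hab : a < b) {s : ℝ} (hs : s ∈ Set.Icc a b)
    (hB : ∀ c ∈ Set.Icc a b, |p.derivative.eval c| ≤ B) :
    |p.eval s - p.eval a| ≤ (b - a) * B := by
  have hB0 : 0 ≤ B := le_trans (abs_nonneg _) (hB a ⟨le_refl a, hab.le⟩)
  rcases eq_or_lt_of_le hs.1 with h | h
  · rw [← h]; simpa using mul_nonneg (by linarith : (0:ℝ) ≤ b - a) hB0
  · obtain ⟨c, hc, hceq⟩ := poly_mvt p h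
    have hsa : s - a ≠ 0 := sub_ne_zero.mpr h.ne'
    rw [eq_comm, div_eq_iff hsa] at hceq
    rw [hceq, abs_mul, abs_of_nonneg (by linarith [hc.1, hc.2] : (0:ℝ) ≤ s - a)]
    have h1 : |p.derivative.eval c| ≤ B := hB c ⟨hc.1.le, le_trans hc.2.le hs.2⟩
    have h2 : s - a ≤ b - a := by linarith [hs.2]
    nlinarith [abs_nonneg (p.derivative.eval c)]

end SplineAux
/-- `X` is a natural cubic spline through the data `(t_i, x_i)_{i ≤ n}`: it is `C²`
on `[t 0, t n]`, agrees with a polynomial of degree at most 3 on each `[t i, t (i+1)]`,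
interpolates the data, and has vanishing second derivative at the endpoints. -/
def IsNaturalCubicSpline (n : ℕ) (t x : ℕ → ℝ) (X : ℝ → ℝ) : Prop :=
  ContDiffOn ℝ 2 X (Set.Icc (t 0) (t n)) ∧
  (∀ i < n, ∃ p : Polynomial ℝ, p.degree ≤ 3 ∧
    ∀ s ∈ Set.Icc (t i) (t (i + 1)), X s = p.eval s) ∧
  (∀ i ≤ n, X (t i) = x i) ∧
  iteratedDerivWithin 2 X (Set.Icc (t 0) (t n)) (t 0) = 0 ∧
  iteratedDerivWithin 2 X (Set.Icc (t 0) (t n)) (t n) = 0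


set_option maxHeartbeats 2000000 in
theorem stmt_7 :
    ∃ C : ℝ, 0 < C ∧
      ∀ (n : ℕ) (hn : 1 ≤ n) (t x : ℕ → ℝ), (∀ i < n, t i < t (i + 1)) →
        ∀ X : ℝ → ℝ, IsNaturalCubicSpline n t x X →
          (⨆ s : Set.Icc (t 0) (t n), |X s|)
          + (⨆ s : Set.Icc (t 0) (t n), |derivWithin X (Set.Icc (t 0) (t n)) s|)
          + (⨆ s : Set.Icc (t 0) (t n), |iteratedDerivWithin 2 X (Set.Icc (t 0) (t n)) s|)
          ≤ C * ((Finset.range n).sup' ⟨0, Finset.mem_range.mpr hn⟩ (fun i => t (i + 1) - t i))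
              * ((Finset.range (n + 1)).sup' ⟨0, Finset.mem_range.mpr (Nat.succ_pos n)⟩
                  (fun i => |x i|))
              * (((Finset.range n).inf' ⟨0, Finset.mem_range.mpr hn⟩
                  (fun i => t (i + 1) - t i))⁻¹) ^ 2
              * (((Finset.range n).sup' ⟨0, Finset.mem_range.mpr hn⟩ (fun i => t (i + 1) - t i))
                + (((Finset.range n).inf' ⟨0, Finset.mem_range.mpr hn⟩
                    (fun i => t (i + 1) - t i))⁻¹)) := by
  refine ⟨200, by norm_num, ?_⟩
  intro n hn t x ht X hX
  obtain ⟨hC2, hpoly, hinterp, hMM0, hMMn⟩ := hX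
  set S : Set ℝ := Set.Icc (t 0) (t n) with hSdef
  have hmono := knots_mono ht
  have h0n : t 0 < t n := lt_of_lt_of_le (ht 0 hn) (hmono n le_rfl 1 hn)
  have hUD : UniqueDiffOn ℝ S := uniqueDiffOn_Icc h0n
  have hf1cont : ContinuousOn (derivWithin X S) S :=
    hC2.continuousOn_derivWithin hUD (by norm_num)
  have hf2cont : ContinuousOn (iteratedDerivWithin 2 X S) S :=
    hC2.continuousOn_iteratedDerivWithin (by norm_num) hUD
  have hpoly' : ∀ i, i < n → ∃ p : Polynomial ℝ, p.natDegree ≤ 3 ∧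
      ∀ s ∈ Set.Icc (t i) (t (i + 1)), X s = p.eval s := by
    intro i hi
    obtain ⟨p, hdeg, hp⟩ := hpoly i hi
    exact ⟨p, Polynomial.natDegree_le_iff_degree_le.mpr (by exact_mod_cast hdeg), hp⟩
  choose! P hPdeg hPX using hpoly'
  have hsubp : ∀ i, i < n → Set.Icc (t i) (t (i + 1)) ⊆ S := by
    intro i hi
    rw [hSdef]
    exact Set.Icc_subset_Icc (hmono i (by omega) 0 (by omega)) (hmono n le_rfl (i + 1) (by omega))
  have hEq := fun i (hi : i < n) =>
    eq_on_piece hUD (ht i hi) (hsubp i hi) (hPX i hi) hf1cont hf2cont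
  set M : ℕ → ℝ := fun i => iteratedDerivWithin 2 X S (t i) with hMdef
  have hM0 : M 0 = 0 := hMM0
  have hMn : M n = 0 := hMMn
  have hPval : ∀ i, i < n → (P i).eval (t i) = x i ∧ (P i).eval (t (i + 1)) = x (i + 1) := by
    intro i hi
    constructor
    · rw [← hPX i hi (t i) (Set.left_mem_Icc.mpr (ht i hi).le)]; exact hinterp i (by omega)
    · rw [← hPX i hi (t (i + 1)) (Set.right_mem_Icc.mpr (ht i hi).le)]
      exact hinterp (i + 1) (by omega)
  have hPM : ∀ i, i < n → (P i).derivative.derivative.eval (t i) = M i ∧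
      (P i).derivative.derivative.eval (t (i + 1)) = M (i + 1) := by
    intro i hi
    exact ⟨((hEq i hi).2 (t i) (Set.left_mem_Icc.mpr (ht i hi).le)).symm,
      ((hEq i hi).2 (t (i + 1)) (Set.right_mem_Icc.mpr (ht i hi).le)).symm⟩
  -- scalar quantities
  set a : ℝ := (Finset.range n).sup' ⟨0, Finset.mem_range.mpr hn⟩ (fun i => t (i + 1) - t i)
    with hadef
  set xb : ℝ := (Finset.range (n + 1)).sup' ⟨0, Finset.mem_range.mpr (Nat.succ_pos n)⟩
    (fun i => |x i|) with hxbdef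
  set m : ℝ := (Finset.range n).inf' ⟨0, Finset.mem_range.mpr hn⟩ (fun i => t (i + 1) - t i)
    with hmdef
  have hm_le : ∀ i, i < n → m ≤ t (i + 1) - t i := by
    intro i hi
    rw [hmdef]
    exact Finset.inf'_le (fun i => t (i + 1) - t i) (Finset.mem_range.mpr hi)
  have ha_ge : ∀ i, i < n → t (i + 1) - t i ≤ a := by
    intro i hi
    rw [hadef]
    exact Finset.le_sup' (fun i => t (i + 1) - t i) (Finset.mem_range.mpr hi)
  have hm_pos : 0 < m := by
    rw [hmdef]
    exact (Finset.lt_inf'_iff _).mpr fun i hi => sub_pos.mpr (ht i (Finset.mem_range.mp hi))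
  have hma : m ≤ a := le_trans (hm_le 0 hn) (ha_ge 0 hn)
  have ha_pos : 0 < a := lt_of_lt_of_le hm_pos hma
  have hxbar : ∀ i, i ≤ n → |x i| ≤ xb := by
    intro i hi
    rw [hxbdef]
    exact Finset.le_sup' (fun i => |x i|) (Finset.mem_range.mpr (by omega : i < n + 1))
  have hxb0 : 0 ≤ xb := le_trans (abs_nonneg _) (hxbar 0 (by omega))
  set K : ℝ := (Finset.range (n + 1)).sup' ⟨0, Finset.mem_range.mpr (Nat.succ_pos n)⟩
    (fun i => |M i|) with hKdef
  have hKle : ∀ i, i ≤ n → |M i| ≤ K := by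
    intro i hi
    rw [hKdef]
    exact Finset.le_sup' (fun i => |M i|) (Finset.mem_range.mpr (by omega : i < n + 1))
  have hK0 : 0 ≤ K := le_trans (abs_nonneg _) (hKle 0 (by omega))
  -- slope bounds
  have hd : ∀ i, i < n → |(x (i + 1) - x i) / (t (i + 1) - t i)| ≤ 2 * xb / m := by
    intro i hi
    rw [abs_div, abs_of_pos (sub_pos.mpr (ht i hi))]
    refine div_le_div₀ (by positivity) ((abs_sub _ _).trans ?_) hm_pos (hm_le i hi)
    linarith [hxbar (i + 1) (by omega), hxbar i (by omega)]
  have hdm : ∀ i, i < n → |(x (i + 1) - x i) / (t (i + 1) - t i)| * m ≤ 2 * xb := by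
    intro i hi
    have h1 := mul_le_mul_of_nonneg_right (hd i hi) hm_pos.le
    rwa [div_mul_cancel₀ _ hm_pos.ne'] at h1
  -- the tridiagonal system
  have hsys : ∀ i, i + 1 < n →
      (x (i + 1) - x i) / (t (i + 1) - t i)
        + (t (i + 1) - t i) * (2 * M (i + 1) + M i) / 6
      = (x (i + 2) - x (i + 1)) / (t (i + 2) - t (i + 1))
        - (t (i + 2) - t (i + 1)) * (2 * M (i + 1) + M (i + 2)) / 6 := by
    intro i hi
    have key : (P i).derivative.eval (t (i + 1)) = (P (i + 1)).derivative.eval (t (i + 1)) := by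
      rw [← (hEq i (by omega)).1 (t (i + 1)) (Set.right_mem_Icc.mpr (ht i (by omega)).le),
        (hEq (i + 1) (by omega)).1 (t (i + 1)) (Set.left_mem_Icc.mpr (ht (i + 1) (by omega)).le)]
    rw [cubic_eval_right (hPdeg i (by omega)) (ht i (by omega)),
      cubic_eval_left (hPdeg (i + 1) (by omega)) (ht (i + 1) (by omega)),
      (hPval i (by omega)).1, (hPval i (by omega)).2, (hPM i (by omega)).1,
      (hPM i (by omega)).2, (hPval (i + 1) (by omega)).1, (hPval (i + 1) (by omega)).2,
      (hPM (i + 1) (by omega)).1, (hPM (i + 1) (by omega)).2] at key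
    convert key using 2 <;> ring
  -- bound on K
  have hKm : K * m ^ 2 ≤ 12 * xb := by
    obtain ⟨i0, hi0mem, hKi0⟩ :=
      Finset.exists_mem_eq_sup' (⟨0, Finset.mem_range.mpr (Nat.succ_pos n)⟩ :
        (Finset.range (n + 1)).Nonempty) (fun i => |M i|)
    have hi0n : i0 ≤ n := by have := Finset.mem_range.mp hi0mem; omega
    have hKval : K = |M i0| := by rw [hKdef]; exact hKi0
    rcases Nat.eq_zero_or_pos i0 with h0 | h0
    · have hK0' : K = 0 := by rw [hKval, h0, hM0, abs_zero]
      rw [hK0']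
      nlinarith
    rcases eq_or_lt_of_le hi0n with hn0 | hn0
    · have hK0' : K = 0 := by rw [hKval, hn0, hMn, abs_zero]
      rw [hK0']
      nlinarith
    -- interior maximizer
    obtain ⟨j, rfl⟩ : ∃ j, i0 = j + 1 := ⟨i0 - 1, by omega⟩
    have hj : j + 1 < n := hn0
    have E := hsys j hj
    set D1 : ℝ := (x (j + 1) - x j) / (t (j + 1) - t j) with hD1def
    set D2 : ℝ := (x (j + 2) - x (j + 1)) / (t (j + 2) - t (j + 1)) with hD2def
    have hq1 : D2 * m ≤ 2 * xb := by
      refine le_trans (mul_le_mul_of_nonneg_right (le_abs_self _) hm_pos.le) ?_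
      rw [hD2def]
      exact hdm (j + 1) (by omega)
    have hq2 : -D1 * m ≤ 2 * xb := by
      refine le_trans (mul_le_mul_of_nonneg_right (neg_le_abs _) hm_pos.le) ?_
      rw [hD1def]
      exact hdm j (by omega)
    have hq3 : -D2 * m ≤ 2 * xb := by
      refine le_trans (mul_le_mul_of_nonneg_right (neg_le_abs _) hm_pos.le) ?_
      rw [hD2def]
      exact hdm (j + 1) (by omega)
    have hq4 : D1 * m ≤ 2 * xb := by
      refine le_trans (mul_le_mul_of_nonneg_right (le_abs_self _) hm_pos.le) ?_
      rw [hD1def]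
      exact hdm j (by omega)
    have hτ1 : m ≤ t (j + 1) - t j := hm_le j (by omega)
    have hτ2 : m ≤ t (j + 2) - t (j + 1) := hm_le (j + 1) (by omega)
    have hAj : |M j| ≤ K := hKle j (by omega)
    have hCj : |M (j + 2)| ≤ K := hKle (j + 2) (by omega)
    obtain ⟨hAj1, hAj2⟩ := abs_le.mp hAj
    obtain ⟨hCj1, hCj2⟩ := abs_le.mp hCj
    have E6 : 6 * D1 + (t (j + 1) - t j) * (2 * M (j + 1) + M j)
        = 6 * D2 - (t (j + 2) - t (j + 1)) * (2 * M (j + 1) + M (j + 2)) := by linarith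
    rcases abs_cases (M (j + 1)) with ⟨hB1, hB2⟩ | ⟨hB1, hB2⟩
    · -- M (j+1) = K ≥ 0
      have hBK : M (j + 1) = K := by rw [hKval, hB1]
      have p1 : m * K ≤ (t (j + 1) - t j) * (2 * K + M j) :=
        mul_le_mul hτ1 (by linarith) (by linarith) (by linarith)
      have p2 : m * K ≤ (t (j + 2) - t (j + 1)) * (2 * K + M (j + 2)) :=
        mul_le_mul hτ2 (by linarith) (by linarith) (by linarith)
      have step : 2 * (m * K) ≤ 6 * (D2 - D1) := by
        rw [hBK] at E6
        linarith
      have step2 := mul_le_mul_of_nonneg_right step hm_pos.le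
      nlinarith
    · -- M (j+1) = -K
      have hBK : M (j + 1) = -K := by rw [hKval]; linarith [hB1]
      have p1 : (t (j + 1) - t j) * (2 * (-K) + M j) ≤ m * (-K) := by
        have hc0 : 2 * (-K) + M j ≤ 2 * (-K) + K := by linarith
        calc (t (j + 1) - t j) * (2 * (-K) + M j)
            ≤ m * (2 * (-K) + M j) :=
              mul_le_mul_of_nonpos_right hτ1 (by linarith)
          _ ≤ m * (-K) := mul_le_mul_of_nonneg_left (by linarith) hm_pos.le
      have p2 : (t (j + 2) - t (j + 1)) * (2 * (-K) + M (j + 2)) ≤ m * (-K) := by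
        calc (t (j + 2) - t (j + 1)) * (2 * (-K) + M (j + 2))
            ≤ m * (2 * (-K) + M (j + 2)) :=
              mul_le_mul_of_nonpos_right hτ2 (by linarith)
          _ ≤ m * (-K) := mul_le_mul_of_nonneg_left (by linarith) hm_pos.le
      have step : 6 * (D2 - D1) ≤ 2 * (m * (-K)) := by
        rw [hBK] at E6
        linarith
      have step2 := mul_le_mul_of_nonneg_right step hm_pos.le
      nlinarith
  -- pointwise bounds on each piece
  have hB2p : ∀ i, i < n → ∀ s ∈ Set.Icc (t i) (t (i + 1)),
      |(P i).derivative.derivative.eval s| ≤ 2 * K := by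
    intro i hi s hs
    refine (affine_bound3 (hPdeg i hi) (ht i hi) hs).trans ?_
    rw [(hPM i hi).1, (hPM i hi).2]
    linarith [hKle i (by omega), hKle (i + 1) (by omega)]
  have hB1p : ∀ i, i < n → ∀ s ∈ Set.Icc (t i) (t (i + 1)),
      |(P i).derivative.eval s| ≤ 2 * xb / m + 3 * (a * K) := by
    intro i hi s hs
    have hend : |(P i).derivative.eval (t i)| ≤ 2 * xb / m + a * K / 2 := by
      rw [cubic_eval_left (hPdeg i hi) (ht i hi), (hPval i hi).1, (hPval i hi).2,
        (hPM i hi).1, (hPM i hi).2]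
      refine (abs_sub _ _).trans (add_le_add (hd i hi) ?_)
      have h3 : |2 * M i + M (i + 1)| ≤ 3 * K := by
        refine (abs_add_le _ _).trans ?_
        rw [abs_mul, abs_two]
        linarith [hKle i (by omega), hKle (i + 1) (by omega)]
      have habs : |(t (i + 1) - t i) * (2 * M i + M (i + 1)) / 6|
          = (t (i + 1) - t i) * |2 * M i + M (i + 1)| / 6 := by
        rw [abs_div, abs_mul, abs_of_pos (sub_pos.mpr (ht i hi))]
        norm_num
      rw [habs]
      have hτa := ha_ge i hi
      have hτpos := sub_pos.mpr (ht i hi)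
      nlinarith [mul_le_mul hτa h3 (abs_nonneg (2 * M i + M (i + 1))) ha_pos.le]
    have hdiff : |(P i).derivative.eval s - (P i).derivative.eval (t i)|
        ≤ (t (i + 1) - t i) * (2 * K) :=
      poly_incr_bound (P i).derivative (ht i hi) hs (fun c hc => hB2p i hi c hc)
    have htri : |(P i).derivative.eval s| ≤ |(P i).derivative.eval (t i)|
        + |(P i).derivative.eval s - (P i).derivative.eval (t i)| := by
      have h := abs_sub_abs_le_abs_sub ((P i).derivative.eval s) ((P i).derivative.eval (t i))
      linarith
    have hτa := ha_ge i hi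
    have h4 : (t (i + 1) - t i) * (2 * K) ≤ a * (2 * K) :=
      mul_le_mul_of_nonneg_right hτa (by linarith)
    have h5 : 0 ≤ a * K := mul_nonneg ha_pos.le hK0
    linarith
  have hB1nn : 0 ≤ 2 * xb / m + 3 * (a * K) := by
    have : 0 ≤ 2 * xb / m := div_nonneg (by linarith) hm_pos.le
    nlinarith [mul_nonneg ha_pos.le hK0]
  have hB0p : ∀ i, i < n → ∀ s ∈ Set.Icc (t i) (t (i + 1)),
      |(P i).eval s| ≤ xb + a * (2 * xb / m + 3 * (a * K)) := by
    intro i hi s hs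
    have hdiff : |(P i).eval s - (P i).eval (t i)|
        ≤ (t (i + 1) - t i) * (2 * xb / m + 3 * (a * K)) :=
      poly_incr_bound (P i) (ht i hi) hs (fun c hc => hB1p i hi c hc)
    have htri : |(P i).eval s| ≤ |(P i).eval (t i)|
        + |(P i).eval s - (P i).eval (t i)| := by
      have h := abs_sub_abs_le_abs_sub ((P i).eval s) ((P i).eval (t i))
      linarith
    have h4 : (t (i + 1) - t i) * (2 * xb / m + 3 * (a * K))
        ≤ a * (2 * xb / m + 3 * (a * K)) :=
      mul_le_mul_of_nonneg_right (ha_ge i hi) hB1nn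
    have h5 : |(P i).eval (t i)| ≤ xb := by
      rw [(hPval i hi).1]
      exact hxbar i (by omega)
    linarith
  -- global pointwise bounds
  have hg0 : ∀ s : S, |X s| ≤ xb + a * (2 * xb / m + 3 * (a * K)) := by
    rintro ⟨s, hsS⟩
    obtain ⟨i, hi, hmem⟩ := knots_cover ht hn (by rwa [hSdef] at hsS)
    rw [hPX i hi s hmem]
    exact hB0p i hi s hmem
  have hg1 : ∀ s : S, |derivWithin X S s| ≤ 2 * xb / m + 3 * (a * K) := by
    rintro ⟨s, hsS⟩
    obtain ⟨i, hi, hmem⟩ := knots_cover ht hn (by rwa [hSdef] at hsS)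
    rw [(hEq i hi).1 s hmem]
    exact hB1p i hi s hmem
  have hg2 : ∀ s : S, |iteratedDerivWithin 2 X S s| ≤ 2 * K := by
    rintro ⟨s, hsS⟩
    obtain ⟨i, hi, hmem⟩ := knots_cover ht hn (by rwa [hSdef] at hsS)
    rw [(hEq i hi).2 s hmem]
    exact hB2p i hi s hmem
  haveI : Nonempty S := ⟨⟨t 0, by rw [hSdef]; exact Set.left_mem_Icc.mpr h0n.le⟩⟩
  have s0 : (⨆ s : S, |X s|) ≤ xb + a * (2 * xb / m + 3 * (a * K)) := ciSup_le hg0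
  have s1 : (⨆ s : S, |derivWithin X S s|) ≤ 2 * xb / m + 3 * (a * K) := ciSup_le hg1
  have s2 : (⨆ s : S, |iteratedDerivWithin 2 X S s|) ≤ 2 * K := ciSup_le hg2
  refine le_trans (add_le_add (add_le_add s0 s1) s2) ?_
  -- final arithmetic
  have ha : 0 < a := ha_pos
  have hm' : m ≠ 0 := hm_pos.ne'
  rw [← sub_nonneg]
  field_simp
  rw [zero_mul]
  rw [sub_nonneg]
  ring_nf
  have hA : 0 ≤ a * m - m * m := by nlinarith
  have e1 : m ^ 4 ≤ a ^ 2 * m ^ 2 := by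
    nlinarith [mul_nonneg hA (add_nonneg (mul_nonneg ha.le hm_pos.le) (mul_nonneg hm_pos.le hm_pos.le))]
  have h2 : m ≤ a * m + 1 := by nlinarith [sq_nonneg (2 * m - 1)]
  have e3 : xb * m ^ 3 ≤ xb * a ^ 2 * m ^ 2 + xb * a * m := by
    nlinarith [mul_le_mul_of_nonneg_left h2 (mul_nonneg (mul_nonneg hxb0 ha.le) hm_pos.le),
      mul_nonneg (mul_nonneg hxb0 hm_pos.le) hA]
  have e4 : K * m ^ 4 ≤ 12 * xb * m ^ 2 := by
    nlinarith [mul_le_mul_of_nonneg_right hKm (mul_nonneg hm_pos.le hm_pos.le)]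
  have e5 : xb * m ^ 2 ≤ xb * a * m := by nlinarith [mul_nonneg hxb0 hA]
  have e6 : a * K * m ^ 4 ≤ 12 * (xb * a ^ 2 * m ^ 2 + xb * a * m) := by
    have h6 : a * (K * m ^ 4) ≤ a * (12 * xb * m ^ 2) :=
      mul_le_mul_of_nonneg_left e4 ha.le
    nlinarith [mul_le_mul_of_nonneg_left h2 (mul_nonneg (mul_nonneg hxb0 ha.le) hm_pos.le)]
  have e7 : a ^ 2 * K * m ^ 4 ≤ 12 * xb * a ^ 2 * m ^ 2 := by
    nlinarith [mul_le_mul_of_nonneg_right e4 (mul_nonneg ha.le ha.le)]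
  have e8 : xb * m ^ 4 ≤ xb * a ^ 2 * m ^ 2 := by
    nlinarith [mul_le_mul_of_nonneg_left e1 hxb0]
  have e9 : xb * a * m ^ 3 ≤ xb * a ^ 2 * m ^ 2 := by
    nlinarith [mul_nonneg (mul_nonneg hxb0 (mul_nonneg ha.le hm_pos.le)) hA]
  nlinarith [e3, e4, e6, e7, e8, e9, e5, mul_nonneg (mul_nonneg hxb0 ha.le) hm_pos.le,
    mul_nonneg (mul_nonneg (mul_nonneg hxb0 ha.le) ha.le) (mul_nonneg hm_pos.le hm_pos.le)]
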